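/- Let (W,w,𝓕) be a fusion frame system for H in which every local frame vector f_i^l has norm 1, let v be weights, let S_𝓕 be the frame operator of the combined family 𝓕 = {f_i^l}_{i,l} (S_𝓕 f = Σ_{i,l} ⟨f,f_i^l⟩ f_i^l), and set 𝓖_c = {𝓖_{c,i}}_i with 𝓖_{c,i} = {(1/(w_i v_i)) S_𝓕^{-1} f_i^l}_{l∈L_i}. Then: (1) (S_𝓕^{-1}W, v, 𝓖_c) is a dual fusion frame system of (W,w,𝓕) with C_{𝓖_c}C_𝓕* component preserving, and it minimizes the one-erasure mean square error Σ_{(i,l)} ‖T_{V,v'} C_𝓖 M_{(i,l)} C_𝓕* T*_{W,w}‖_F² over all dual fusion frame systems (V,v',𝓖) of (W,w,𝓕); (2) every dual fusion frame system (V,v',𝓖) attaining this minimum satisfies T_{V,v'} C_𝓖 = T_{S_𝓕^{-1}W,v} C_{𝓖_c}; (3) if moreover C_𝓖C_𝓕* is component preserving and v' = v, then V_i = S_𝓕^{-1} W_i and 𝓖_i = 𝓖_{c,i} for all i. -/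

import Mathlib

noncomputable section

open scoped InnerProductSpace

variable {𝕜 : Type} [RCLike 𝕜]
variable {H : Type} [NormedAddCommGroup H] [InnerProductSpace 𝕜 H] [FiniteDimensional 𝕜 H]
variable {m : ℕ}

/-- The Hilbert space `𝒲 = ⊕ᵢ Wᵢ` of a fusion sequence, with the ℓ² inner product. -/
abbrev FFSpace (W : Fin m → Submodule 𝕜 H) : Type := PiLp 2 (fun i => ↥(W i))

/-- The synthesis operator `T_{W,w} : 𝒲 → H`, `(fᵢ)ᵢ ↦ Σᵢ wᵢ fᵢ`. -/
def synthOp (W : Fin m → Submodule 𝕜 H) (w : Fin m → ℝ) : FFSpace W →ₗ[𝕜] H where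
  toFun f := ∑ i, (w i : 𝕜) • (f i : H)
  map_add' f g := by
    simp [Finset.sum_add_distrib, smul_add]
  map_smul' c f := by
    simp [Finset.smul_sum]
    congr 1; funext i; rw [smul_comm]

/-- The analysis operator `T*_{W,w} : H → 𝒲`, `f ↦ (wᵢ π_{Wᵢ} f)ᵢ`. -/
def analysisOp (W : Fin m → Submodule 𝕜 H) (w : Fin m → ℝ) : H →ₗ[𝕜] FFSpace W where
  toFun f := WithLp.toLp 2 (fun i => (w i : 𝕜) • ((W i).orthogonalProjectionOnto f))
  map_add' f g := by
    ext i : 2; simp [smul_add]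
  map_smul' c f := by
    ext i : 2; simp; rw [smul_comm]

/-- The coordinate operator `M_{J,W} : 𝒲 → 𝒲`, keeping the coordinates in `J`. -/
def MJ (W : Fin m → Submodule 𝕜 H) (J : Finset (Fin m)) : FFSpace W →ₗ[𝕜] FFSpace W where
  toFun f := WithLp.toLp 2 (fun j => if j ∈ J then f j else 0)
  map_add' f g := by
    ext j : 2; by_cases h : j ∈ J <;> simp [h]
  map_smul' c f := by
    ext j : 2; by_cases h : j ∈ J <;> simp [h]

/-- `Q : 𝒲 → 𝒱` is block-diagonal if `Q M_{j,W} 𝒲 ⊆ M_{j,V} 𝒱` for all `j`. -/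
def IsBlockDiagonal (W V : Fin m → Submodule 𝕜 H) (Q : FFSpace W →ₗ[𝕜] FFSpace V) : Prop :=
  ∀ j, LinearMap.range (Q ∘ₗ MJ W {j}) ≤ LinearMap.range (MJ V {j})

/-- `Q : 𝒲 → 𝒱` is component preserving if `Q M_{j,W} 𝒲 = M_{j,V} 𝒱` for all `j`. -/
def IsComponentPreserving (W V : Fin m → Submodule 𝕜 H) (Q : FFSpace W →ₗ[𝕜] FFSpace V) : Prop :=
  ∀ j, LinearMap.range (Q ∘ₗ MJ W {j}) = LinearMap.range (MJ V {j})

/-- The orthogonal projection onto `U` as an endomorphism of `H`. -/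
def projL (U : Submodule 𝕜 H) : H →ₗ[𝕜] H :=
  U.subtype ∘ₗ (U.orthogonalProjectionOnto : H →L[𝕜] U).toLinearMap

/-- The coefficient space `⊕ᵢ 𝔽^{Lᵢ}`. -/
abbrev CoefSpace (𝕜 : Type) [RCLike 𝕜] {m : ℕ} (L : Fin m → Type) [∀ i, Fintype (L i)] : Type :=
  PiLp 2 (fun i => EuclideanSpace 𝕜 (L i))

/-- The operator `C_𝓕 : ⊕ᵢ 𝔽^{Lᵢ} → 𝒲`, `((xᵢˡ)ₗ)ᵢ ↦ (Σₗ xᵢˡ fᵢˡ)ᵢ`, associated to a family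
of local frames `𝓕ᵢ = {fᵢˡ}ₗ ⊂ Wᵢ`. -/
def CFop (W : Fin m → Submodule 𝕜 H) (L : Fin m → Type) [∀ i, Fintype (L i)]
    (F : ∀ i, L i → ↥(W i)) : CoefSpace 𝕜 L →ₗ[𝕜] FFSpace W where
  toFun x := WithLp.toLp 2 (fun i => ∑ l, x i l • F i l)
  map_add' x y := by
    rw [WithLp.ext_iff]; funext i
    show ∑ l, (x i l + y i l) • F i l = _
    simp [Finset.sum_add_distrib, add_smul]
  map_smul' c x := by
    rw [WithLp.ext_iff]; funext i
    show ∑ l, (c * x i l) • F i l = _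
    simp [Finset.smul_sum, smul_smul]

/-- The adjoint `C*_𝓕 : 𝒲 → ⊕ᵢ 𝔽^{Lᵢ}`, `(gᵢ)ᵢ ↦ ((⟨fᵢˡ, gᵢ⟩)ₗ)ᵢ` (inner products taken in
Mathlib's convention, conjugate-linear in the first variable). -/
def CFadj (W : Fin m → Submodule 𝕜 H) (L : Fin m → Type) [∀ i, Fintype (L i)]
    (F : ∀ i, L i → ↥(W i)) : FFSpace W →ₗ[𝕜] CoefSpace 𝕜 L where
  toFun g := WithLp.toLp 2 (fun i => WithLp.toLp 2 (fun l => (inner 𝕜 (F i l) (g i) : 𝕜)))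
  map_add' x y := by
    ext i l : 4
    show (inner 𝕜 (F i l) (x i + y i) : 𝕜) = _
    simp [inner_add_right]
  map_smul' c x := by
    ext i l : 4
    show (inner 𝕜 (F i l) (c • x i) : 𝕜) = _
    simp [inner_smul_right]

/-- The coordinate operator `M_{(i₀,l₀)}` on `⊕ᵢ 𝔽^{Lᵢ}`, zeroing all coordinates except
the `(i₀,l₀)`-th one. -/
def Mpair (L : Fin m → Type) [∀ i, Fintype (L i)] [∀ i, DecidableEq (L i)]
    (i₀ : Fin m) (l₀ : L i₀) : CoefSpace 𝕜 L →ₗ[𝕜] CoefSpace 𝕜 L where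
  toFun x := WithLp.toLp 2 (Pi.single i₀ (EuclideanSpace.single l₀ (x i₀ l₀)) : ∀ j, EuclideanSpace 𝕜 (L j))
  map_add' x y := by
    ext j l : 4
    by_cases h : j = i₀
    · subst h
      by_cases h' : l = l₀ <;>
        simp [Pi.single_eq_same, EuclideanSpace.single_apply, h']
    · simp [Pi.single_eq_of_ne h]
  map_smul' c x := by
    ext j l : 4
    by_cases h : j = i₀
    · subst h
      by_cases h' : l = l₀ <;>
        simp [Pi.single_eq_same, EuclideanSpace.single_apply, h']
    · simp [Pi.single_eq_of_ne h]

/-- The frame operator `S_𝓕 f = Σᵢ Σₗ ⟨fᵢˡ, f⟩ fᵢˡ` of the combined local family `𝓕`. -/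
def SFop (W : Fin m → Submodule 𝕜 H) (L : Fin m → Type) [∀ i, Fintype (L i)]
    (F : ∀ i, L i → ↥(W i)) : H →ₗ[𝕜] H where
  toFun f := ∑ i, ∑ l, (inner 𝕜 ((F i l : H)) f : 𝕜) • (F i l : H)
  map_add' x y := by
    simp [inner_add_right, add_smul, Finset.sum_add_distrib]
  map_smul' c x := by
    simp [inner_smul_right, smul_smul, Finset.smul_sum]

/-- The canonical local frames `𝓖_{c,i} = {(1/(wᵢvᵢ)) S_𝓕⁻¹ fᵢˡ}ₗ` of the subspaces
`S_𝓕⁻¹ Wᵢ`, with the inverse of `S_𝓕` given by `Sinv`. -/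
def Gc (W : Fin m → Submodule 𝕜 H) (L : Fin m → Type) [∀ i, Fintype (L i)]
    (F : ∀ i, L i → ↥(W i)) (w v : Fin m → ℝ) (Sinv : H →ₗ[𝕜] H)
    (h : SFop W L F ∘ₗ Sinv = LinearMap.id) :
    ∀ i, L i → ↥(Submodule.comap (SFop W L F) (W i)) :=
  fun i l => ⟨((w i * v i : ℝ) : 𝕜)⁻¹ • Sinv (F i l : H),
    Submodule.smul_mem _ _ (Submodule.mem_comap.mpr (by
      have := LinearMap.congr_fun h ((F i l : H))
      simp only [LinearMap.comp_apply, LinearMap.id_apply] at this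
      rw [this]; exact (F i l).2))⟩

/-- The squared Frobenius norm `‖B‖_F² = tr(B*B)` of a linear map between
finite-dimensional inner product spaces. -/
def frobSq {𝕜 : Type} [RCLike 𝕜] {E F : Type} [NormedAddCommGroup E] [InnerProductSpace 𝕜 E]
    [FiniteDimensional 𝕜 E] [NormedAddCommGroup F] [InnerProductSpace 𝕜 F]
    [FiniteDimensional 𝕜 F] (B : E →ₗ[𝕜] F) : ℝ :=
  RCLike.re (LinearMap.trace 𝕜 E (LinearMap.adjoint B ∘ₗ B))

set_option linter.unusedSectionVars false

section Helpers

open Finset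

variable (W : Fin m → Submodule 𝕜 H) (L : Fin m → Type) [∀ i, Fintype (L i)]
  (F : ∀ i, L i → ↥(W i))

def rkOne (a b : H) : H →ₗ[𝕜] H where
  toFun x := (inner 𝕜 a x : 𝕜) • b
  map_add' x y := by simp [inner_add_right, add_smul]
  map_smul' c x := by simp [inner_smul_right, smul_smul]

lemma rkOne_apply (a b x : H) : (rkOne a b : H →ₗ[𝕜] H) x = (inner 𝕜 a x : 𝕜) • b := rfl

lemma adjoint_rkOne (a b : H) : LinearMap.adjoint (rkOne a b : H →ₗ[𝕜] H) = rkOne b a := by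
  symm
  rw [LinearMap.eq_adjoint_iff]
  intro x y
  simp only [rkOne_apply, inner_smul_left, inner_smul_right, inner_conj_symm]
  ring

lemma rkOne_comp (a b c d : H) :
    (rkOne c d : H →ₗ[𝕜] H) ∘ₗ rkOne a b = (inner 𝕜 c b : 𝕜) • rkOne a d := by
  ext x
  simp only [LinearMap.comp_apply, LinearMap.smul_apply, rkOne_apply, inner_smul_right,
    smul_smul]
  ring_nf

lemma trace_rkOne (a b : H) : LinearMap.trace 𝕜 H (rkOne a b) = (inner 𝕜 a b : 𝕜) := by
  classical
  let e := stdOrthonormalBasis 𝕜 H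
  rw [LinearMap.trace_eq_matrix_trace 𝕜 e.toBasis, Matrix.trace]
  have : ∀ k, (LinearMap.toMatrix e.toBasis e.toBasis (rkOne a b)).diag k
      = (inner 𝕜 a (e k) : 𝕜) * inner 𝕜 (e k) b := by
    intro k
    simp [Matrix.diag, LinearMap.toMatrix_apply, e.coe_toBasis_repr_apply,
      OrthonormalBasis.repr_apply_apply, e.coe_toBasis]
    rw [rkOne_apply, inner_smul_right]
  simp_rw [this]
  exact e.sum_inner_mul_inner a b

lemma frobSq_rkOne (a b : H) : frobSq (rkOne a b : H →ₗ[𝕜] H) = ‖a‖^2 * ‖b‖^2 := by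
  unfold frobSq
  rw [adjoint_rkOne, rkOne_comp, map_smul, trace_rkOne]
  rw [smul_eq_mul, inner_self_eq_norm_sq_to_K, inner_self_eq_norm_sq_to_K,
    ← RCLike.ofReal_pow, ← RCLike.ofReal_pow, ← RCLike.ofReal_mul, RCLike.ofReal_re]
  ring

lemma SFop_apply (x : H) :
    SFop W L F x = ∑ i, ∑ l, (inner 𝕜 ((F i l : H)) x : 𝕜) • (F i l : H) := rfl

lemma SFop_sym (x y : H) :
    (inner 𝕜 (SFop W L F x) y : 𝕜) = inner 𝕜 x (SFop W L F y) := by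
  simp only [SFop_apply, sum_inner, inner_sum, inner_smul_left, inner_smul_right,
    inner_conj_symm]
  refine Finset.sum_congr rfl fun i _ => Finset.sum_congr rfl fun l _ => by ring

lemma Sinv_sym (Sinv : H →ₗ[𝕜] H) (h : SFop W L F ∘ₗ Sinv = LinearMap.id)
    (h' : Sinv ∘ₗ SFop W L F = LinearMap.id) (x y : H) :
    (inner 𝕜 (Sinv x) y : 𝕜) = inner 𝕜 x (Sinv y) := by
  have hx : SFop W L F (Sinv x) = x := LinearMap.congr_fun h x
  have hy : SFop W L F (Sinv y) = y := LinearMap.congr_fun h y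
  calc (inner 𝕜 (Sinv x) y : 𝕜) = inner 𝕜 (Sinv x) (SFop W L F (Sinv y)) := by rw [hy]
    _ = inner 𝕜 (SFop W L F (Sinv x)) (Sinv y) := (SFop_sym W L F _ _).symm
    _ = inner 𝕜 x (Sinv y) := by rw [hx]

lemma cross_zero (Sinv : H →ₗ[𝕜] H) (h : SFop W L F ∘ₗ Sinv = LinearMap.id)
    (h' : Sinv ∘ₗ SFop W L F = LinearMap.id) (u : ∀ i, L i → H)
    (hu : ∀ x : H, ∑ i, ∑ l, (inner 𝕜 ((F i l : H)) x : 𝕜) • u i l = 0) :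
    ∑ i, ∑ l, (inner 𝕜 (Sinv ((F i l : H))) (u i l) : 𝕜) = 0 := by
  classical
  let e := stdOrthonormalBasis 𝕜 H
  have key : ∀ (i : Fin m) (l : L i), (inner 𝕜 (Sinv ((F i l : H))) (u i l) : 𝕜)
      = ∑ k, (inner 𝕜 ((F i l : H)) (Sinv (e k)) : 𝕜) * inner 𝕜 (e k) (u i l) := by
    intro i l
    rw [← e.sum_inner_mul_inner (Sinv ((F i l : H))) (u i l)]
    refine Finset.sum_congr rfl fun k _ => ?_
    rw [Sinv_sym W L F Sinv h h']
  simp_rw [key]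
  have hswap : ∑ i, ∑ l, ∑ k, (inner 𝕜 ((F i l : H)) (Sinv (e k)) : 𝕜) * inner 𝕜 (e k) (u i l)
      = ∑ k, ∑ i, ∑ l, (inner 𝕜 ((F i l : H)) (Sinv (e k)) : 𝕜) * inner 𝕜 (e k) (u i l) := by
    rw [Finset.sum_comm]
    exact Finset.sum_congr rfl fun k _ => Finset.sum_comm
  rw [hswap]
  refine Finset.sum_eq_zero fun k _ => ?_
  have h0 := congrArg (fun z => (inner 𝕜 (e k) z : 𝕜)) (hu (Sinv (e k)))
  simpa only [inner_sum, inner_smul_right, inner_zero_right] using h0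

lemma mse_split (Sinv : H →ₗ[𝕜] H) (h : SFop W L F ∘ₗ Sinv = LinearMap.id)
    (h' : Sinv ∘ₗ SFop W L F = LinearMap.id) (hh : ∀ i, L i → H)
    (hdual : ∀ x : H, ∑ i, ∑ l, (inner 𝕜 ((F i l : H)) x : 𝕜) • hh i l = x)
    (hcan : ∀ x : H, ∑ i, ∑ l, (inner 𝕜 ((F i l : H)) x : 𝕜) • Sinv ((F i l : H)) = x) :
    ∑ i, ∑ l, ‖hh i l‖^2
      = (∑ i, ∑ l, ‖Sinv ((F i l : H))‖^2)
        + ∑ i, ∑ l, ‖hh i l - Sinv ((F i l : H))‖^2 := by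
  have hu : ∀ x : H,
      ∑ i, ∑ l, (inner 𝕜 ((F i l : H)) x : 𝕜) • (hh i l - Sinv ((F i l : H))) = 0 := by
    intro x
    simp only [smul_sub, Finset.sum_sub_distrib, hdual x, hcan x, sub_self]
  have hcz := cross_zero W L F Sinv h h' _ hu
  have expand : ∀ (i : Fin m) (l : L i), ‖hh i l‖^2
      = ‖Sinv ((F i l : H))‖^2
        + 2 * RCLike.re (inner 𝕜 (Sinv ((F i l : H))) (hh i l - Sinv ((F i l : H))) : 𝕜)
        + ‖hh i l - Sinv ((F i l : H))‖^2 := by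
    intro i l
    rw [← norm_add_sq (𝕜 := 𝕜), add_sub_cancel]
  calc ∑ i, ∑ l, ‖hh i l‖^2
      = ∑ i, ∑ l, (‖Sinv ((F i l : H))‖^2
          + 2 * RCLike.re (inner 𝕜 (Sinv ((F i l : H))) (hh i l - Sinv ((F i l : H))) : 𝕜)
          + ‖hh i l - Sinv ((F i l : H))‖^2) :=
        Finset.sum_congr rfl fun i _ => Finset.sum_congr rfl fun l _ => expand i l
    _ = (∑ i, ∑ l, ‖Sinv ((F i l : H))‖^2)
          + 2 * RCLike.re (∑ i, ∑ l,
              (inner 𝕜 (Sinv ((F i l : H))) (hh i l - Sinv ((F i l : H))) : 𝕜))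
          + ∑ i, ∑ l, ‖hh i l - Sinv ((F i l : H))‖^2 := by
        simp only [Finset.sum_add_distrib, map_sum, Finset.mul_sum]
    _ = _ := by rw [hcz]; simp

lemma synthOp_apply (w : Fin m → ℝ) (f : FFSpace W) :
    synthOp W w f = ∑ i, (w i : 𝕜) • (f i : H) := rfl

lemma analysisOp_apply (w : Fin m → ℝ) (x : H) (i : Fin m) :
    analysisOp W w x i = (w i : 𝕜) • (W i).orthogonalProjectionOnto x := rfl

lemma CFop_apply (x : CoefSpace 𝕜 L) (i : Fin m) :
    CFop W L F x i = ∑ l, x i l • F i l := rfl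

lemma CFadj_apply (g : FFSpace W) (i : Fin m) (l : L i) :
    CFadj W L F g i l = (inner 𝕜 (F i l) (g i) : 𝕜) := rfl

lemma Mpair_apply [∀ i, DecidableEq (L i)] (i₀ : Fin m) (l₀ : L i₀) (x : CoefSpace 𝕜 L)
    (j : Fin m) :
    Mpair (𝕜 := 𝕜) L i₀ l₀ x j
      = Pi.single (M := fun j => EuclideanSpace 𝕜 (L j)) i₀
          (EuclideanSpace.single l₀ (x i₀ l₀)) j := rfl

lemma bigop_apply (w : Fin m → ℝ) (V : Fin m → Submodule 𝕜 H) (v' : Fin m → ℝ)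
    (G : ∀ i, L i → ↥(V i)) (x : H) :
    (synthOp V v' ∘ₗ CFop V L G ∘ₗ CFadj W L F ∘ₗ analysisOp W w) x
      = ∑ i, ∑ l, (inner 𝕜 ((F i l : H)) x : 𝕜)
          • (((w i * v' i : ℝ) : 𝕜) • (G i l : H)) := by
  simp only [LinearMap.comp_apply, synthOp_apply, CFop_apply, CFadj_apply,
    analysisOp_apply]
  simp only [inner_smul_right, Submodule.inner_orthogonalProjectionOnto_eq_of_mem_left,
    Submodule.coe_sum, SetLike.val_smul, Finset.smul_sum, smul_smul]
  refine Finset.sum_congr rfl fun i _ => Finset.sum_congr rfl fun l _ => ?_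
  congr 1
  push_cast
  ring

lemma eraseop_eq [∀ i, DecidableEq (L i)] (w : Fin m → ℝ) (V : Fin m → Submodule 𝕜 H)
    (v' : Fin m → ℝ) (G : ∀ i, L i → ↥(V i)) (i₀ : Fin m) (l₀ : L i₀) :
    ((synthOp V v' ∘ₗ CFop V L G) ∘ₗ Mpair L i₀ l₀ ∘ₗ CFadj W L F ∘ₗ analysisOp W w)
      = rkOne ((F i₀ l₀ : H)) (((w i₀ * v' i₀ : ℝ) : 𝕜) • (G i₀ l₀ : H)) := by
  apply LinearMap.ext; intro x
  simp only [LinearMap.comp_apply, synthOp_apply, CFop_apply, CFadj_apply,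
    analysisOp_apply, Mpair_apply]
  set c : 𝕜 := inner 𝕜 (F i₀ l₀) ((w i₀ : 𝕜) • ((W i₀).orthogonalProjectionOnto x)) with hc
  rw [Finset.sum_eq_single i₀]
  · rw [Pi.single_eq_same]
    have : ∀ l : L i₀, (EuclideanSpace.single l₀ c l) • G i₀ l
        = if l = l₀ then c • G i₀ l else 0 := by
      intro l
      rw [EuclideanSpace.single_apply]
      split <;> simp
    rw [Finset.sum_congr rfl fun l _ => this l, Finset.sum_ite_eq' Finset.univ l₀]
    simp only [Finset.mem_univ, if_true, rkOne_apply, hc, inner_smul_right,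
      Submodule.inner_orthogonalProjectionOnto_eq_of_mem_left, SetLike.val_smul, smul_smul]
    congr 1
    push_cast
    ring
  · intro j _ hj
    rw [Pi.single_eq_of_ne hj]
    simp
  · intro hmem
    exact absurd (Finset.mem_univ i₀) hmem

lemma frob_erase [∀ i, DecidableEq (L i)] (w : Fin m → ℝ) (V : Fin m → Submodule 𝕜 H)
    (v' : Fin m → ℝ) (G : ∀ i, L i → ↥(V i)) (i₀ : Fin m) (l₀ : L i₀)
    (hnorm : ‖(F i₀ l₀ : H)‖ = 1) :
    frobSq ((synthOp V v' ∘ₗ CFop V L G) ∘ₗ Mpair L i₀ l₀ ∘ₗ CFadj W L F ∘ₗ analysisOp W w)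
      = ‖((w i₀ * v' i₀ : ℝ) : 𝕜) • (G i₀ l₀ : H)‖^2 := by
  rw [eraseop_eq, frobSq_rkOne, hnorm, one_pow, one_mul]

lemma MJ_apply (J : Finset (Fin m)) (f : FFSpace W) (j : Fin m) :
    MJ W J f j = if j ∈ J then f j else 0 := rfl

lemma mem_range_MJ (V : Fin m → Submodule 𝕜 H) (j : Fin m) (x : FFSpace V) :
    x ∈ LinearMap.range (MJ V {j}) ↔ ∀ k, k ≠ j → x k = 0 := by
  constructor
  · rintro ⟨y, rfl⟩ k hk
    rw [MJ_apply]
    simp [hk]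
  · intro hx
    refine ⟨x, PiLp.ext fun k => ?_⟩
    rw [MJ_apply]
    by_cases hk : k = j
    · simp [hk]
    · simp [hk, hx k hk]

lemma Q_MJ_apply (V : Fin m → Submodule 𝕜 H) (G : ∀ i, L i → ↥(V i)) (j k : Fin m)
    (g : FFSpace W) :
    ((CFop V L G ∘ₗ CFadj W L F) ∘ₗ MJ W {j}) g k
      = if k = j then ∑ l, (inner 𝕜 (F k l) (g k) : 𝕜) • G k l else 0 := by
  simp only [LinearMap.comp_apply, CFop_apply, CFadj_apply, MJ_apply]
  by_cases hk : k = j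
  · simp [hk]
  · simp [hk]

def SjOp (j : Fin m) : ↥(W j) →ₗ[𝕜] ↥(W j) where
  toFun g := ∑ l, (inner 𝕜 (F j l) g : 𝕜) • F j l
  map_add' x y := by simp [inner_add_right, add_smul, Finset.sum_add_distrib]
  map_smul' c x := by simp [inner_smul_right, smul_smul, Finset.smul_sum]

lemma SjOp_apply (j : Fin m) (g : ↥(W j)) :
    SjOp W L F j g = ∑ l, (inner 𝕜 (F j l) g : 𝕜) • F j l := rfl

lemma SjOp_surj (j : Fin m) (hFj : Submodule.span 𝕜 (Set.range (F j)) = ⊤) :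
    Function.Surjective (SjOp W L F j) := by
  have hinj : Function.Injective (SjOp W L F j) := by
    rw [← LinearMap.ker_eq_bot, Submodule.eq_bot_iff]
    intro g hg
    rw [LinearMap.mem_ker] at hg
    have h0 : (inner 𝕜 g (SjOp W L F j g) : 𝕜) = 0 := by rw [hg, inner_zero_right]
    rw [SjOp_apply, inner_sum] at h0
    simp only [inner_smul_right] at h0
    have h0' : ∑ l, (‖(inner 𝕜 (F j l) g : 𝕜)‖ : ℝ)^2 = 0 := by
      have := congrArg RCLike.re h0
      rw [map_sum, map_zero] at this
      rw [← this]
      refine Finset.sum_congr rfl fun l _ => ?_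
      rw [← inner_conj_symm g (F j l), RCLike.mul_conj, ← RCLike.ofReal_pow,
        RCLike.ofReal_re]
    have hz : ∀ l, (inner 𝕜 (F j l) g : 𝕜) = 0 := by
      intro l
      have := (Finset.sum_eq_zero_iff_of_nonneg (fun l _ => sq_nonneg _)).mp h0' l
        (Finset.mem_univ l)
      have hn := pow_eq_zero_iff (n := 2) (by norm_num) |>.mp this
      exact norm_eq_zero.mp hn
    have : (inner 𝕜 g g : 𝕜) = 0 := by
      have hmem : g ∈ Submodule.span 𝕜 (Set.range (F j)) := by rw [hFj]; trivial
      refine Submodule.span_induction (p := fun y _ => (inner 𝕜 y g : 𝕜) = 0)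
        ?_ ?_ ?_ ?_ hmem
      · rintro y ⟨l, rfl⟩; exact hz l
      · simp
      · intro a b _ _ ha hb; rw [inner_add_left, ha, hb, add_zero]
      · intro c a _ ha; rw [inner_smul_left, ha, mul_zero]
    exact inner_self_eq_zero.mp this
  exact (LinearMap.injective_iff_surjective).mp hinj

lemma span_coe (U : Submodule 𝕜 H) {ι : Type} (f : ι → ↥U)
    (hf : Submodule.span 𝕜 (Set.range f) = ⊤) :
    Submodule.span 𝕜 (Set.range (fun l => (f l : H))) = U := by
  have := congrArg (Submodule.map U.subtype) hf
  rw [Submodule.map_span, Submodule.map_top, Submodule.range_subtype] at this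
  rw [← Set.range_comp] at this
  exact this

lemma can_dual (Sinv : H →ₗ[𝕜] H) (h' : Sinv ∘ₗ SFop W L F = LinearMap.id) (x : H) :
    ∑ i, ∑ l, (inner 𝕜 ((F i l : H)) x : 𝕜) • Sinv ((F i l : H)) = x := by
  have : ∑ i, ∑ l, (inner 𝕜 ((F i l : H)) x : 𝕜) • Sinv ((F i l : H))
      = Sinv (SFop W L F x) := by
    rw [SFop_apply, map_sum]
    refine Finset.sum_congr rfl fun i _ => ?_
    rw [map_sum]
    exact Finset.sum_congr rfl fun l _ => (map_smul Sinv _ _).symm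
  rw [this]
  exact LinearMap.congr_fun h' x

lemma Gc_coe (w v : Fin m → ℝ) (Sinv : H →ₗ[𝕜] H)
    (h : SFop W L F ∘ₗ Sinv = LinearMap.id) (i : Fin m) (l : L i) :
    ((Gc W L F w v Sinv h i l : H)) = ((w i * v i : ℝ) : 𝕜)⁻¹ • Sinv ((F i l : H)) := rfl

end Helpers

/-- optimal dual fusion frame systems for one erasure of a local frame
vector, for a fusion frame system `(W,w,𝓕)` with unit-norm local frame vectors:
`(S_𝓕⁻¹W, v, 𝓖_c)` is a component preserving dual fusion frame system minimizing the
one-erasure mean square error; any minimizer `(V,v',𝓖)` satisfies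
`T_{V,v'} C_𝓖 = T_{S_𝓕⁻¹W,v} C_{𝓖_c}`; and any component preserving minimizer with
weights `v` equals `(S_𝓕⁻¹W, v, 𝓖_c)`. -/
theorem Gc_optimal_dual_fusion_frame_system
    {𝕜 : Type} [RCLike 𝕜] {H : Type} [NormedAddCommGroup H] [InnerProductSpace 𝕜 H]
    [FiniteDimensional 𝕜 H] {m : ℕ}
    (W : Fin m → Submodule 𝕜 H) (w v : Fin m → ℝ) (hw : ∀ i, 0 < w i) (hv : ∀ i, 0 < v i)
    (hW : ⨆ i, W i = ⊤)
    (L : Fin m → Type) [∀ i, Fintype (L i)] [∀ i, DecidableEq (L i)]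
    (F : ∀ i, L i → ↥(W i))
    (hF : ∀ i, Submodule.span 𝕜 (Set.range (F i)) = ⊤)
    (hnorm : ∀ i l, ‖(F i l : H)‖ = 1)
    (Sinv : H →ₗ[𝕜] H) (h : SFop W L F ∘ₗ Sinv = LinearMap.id)
    (h' : Sinv ∘ₗ SFop W L F = LinearMap.id) :
    (synthOp (fun i => Submodule.comap (SFop W L F) (W i)) v ∘ₗ
        CFop _ L (Gc W L F w v Sinv h) ∘ₗ CFadj W L F ∘ₗ analysisOp W w = LinearMap.id) ∧
    IsComponentPreserving W (fun i => Submodule.comap (SFop W L F) (W i))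
      (CFop _ L (Gc W L F w v Sinv h) ∘ₗ CFadj W L F) ∧
    (∀ (V : Fin m → Submodule 𝕜 H) (v' : Fin m → ℝ), (∀ i, 0 < v' i) → (⨆ i, V i = ⊤) →
      ∀ G : ∀ i, L i → ↥(V i), (∀ i, Submodule.span 𝕜 (Set.range (G i)) = ⊤) →
        synthOp V v' ∘ₗ CFop V L G ∘ₗ CFadj W L F ∘ₗ analysisOp W w = LinearMap.id →
        (∑ i, ∑ l, frobSq
            ((synthOp _ v ∘ₗ CFop _ L (Gc W L F w v Sinv h)) ∘ₗ Mpair L i l ∘ₗ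
              CFadj W L F ∘ₗ analysisOp W w) ≤
          ∑ i, ∑ l, frobSq
            ((synthOp V v' ∘ₗ CFop V L G) ∘ₗ Mpair L i l ∘ₗ
              CFadj W L F ∘ₗ analysisOp W w)) ∧
        (∑ i, ∑ l, frobSq
            ((synthOp V v' ∘ₗ CFop V L G) ∘ₗ Mpair L i l ∘ₗ
              CFadj W L F ∘ₗ analysisOp W w) =
          ∑ i, ∑ l, frobSq
            ((synthOp _ v ∘ₗ CFop _ L (Gc W L F w v Sinv h)) ∘ₗ Mpair L i l ∘ₗ
              CFadj W L F ∘ₗ analysisOp W w) →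
          synthOp V v' ∘ₗ CFop V L G =
            synthOp _ v ∘ₗ CFop _ L (Gc W L F w v Sinv h))) ∧
    (∀ (V : Fin m → Submodule 𝕜 H), (⨆ i, V i = ⊤) →
      ∀ G : ∀ i, L i → ↥(V i), (∀ i, Submodule.span 𝕜 (Set.range (G i)) = ⊤) →
        synthOp V v ∘ₗ CFop V L G ∘ₗ CFadj W L F ∘ₗ analysisOp W w = LinearMap.id →
        IsComponentPreserving W V (CFop V L G ∘ₗ CFadj W L F) →
        (∑ i, ∑ l, frobSq
            ((synthOp V v ∘ₗ CFop V L G) ∘ₗ Mpair L i l ∘ₗ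
              CFadj W L F ∘ₗ analysisOp W w) =
          ∑ i, ∑ l, frobSq
            ((synthOp _ v ∘ₗ CFop _ L (Gc W L F w v Sinv h)) ∘ₗ Mpair L i l ∘ₗ
              CFadj W L F ∘ₗ analysisOp W w)) →
        (∀ i, V i = Submodule.comap (SFop W L F) (W i)) ∧
        (∀ i l, (G i l : H) = ((w i * v i : ℝ) : 𝕜)⁻¹ • Sinv (F i l : H))) := by
  classical
  have hwne : ∀ i, ((w i : ℝ) : 𝕜) ≠ 0 := fun i =>
    RCLike.ofReal_ne_zero.mpr (ne_of_gt (hw i))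
  have hwvne : ∀ i, ((w i * v i : ℝ) : 𝕜) ≠ 0 := fun i =>
    RCLike.ofReal_ne_zero.mpr (ne_of_gt (mul_pos (hw i) (hv i)))
  have hGc : ∀ (i : Fin m) (l : L i),
      ((w i * v i : ℝ) : 𝕜) • ((Gc W L F w v Sinv h i l : H)) = Sinv ((F i l : H)) := by
    intro i l
    rw [Gc_coe, smul_smul, mul_inv_cancel₀ (hwvne i), one_smul]
  have hcan := can_dual W L F Sinv h'
  have hcansum : ∑ i, ∑ l, frobSq
      ((synthOp (fun i => Submodule.comap (SFop W L F) (W i)) v ∘ₗ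
          CFop _ L (Gc W L F w v Sinv h)) ∘ₗ Mpair L i l ∘ₗ
        CFadj W L F ∘ₗ analysisOp W w)
      = ∑ i, ∑ l, ‖Sinv ((F i l : H))‖^2 := by
    refine Finset.sum_congr rfl fun i _ => Finset.sum_congr rfl fun l _ => ?_
    rw [frob_erase W L F w _ v (Gc W L F w v Sinv h) i l (hnorm i l), hGc]
  refine ⟨?_, ?_, ?_, ?_⟩
  · -- part 1 : dual identity
    apply LinearMap.ext; intro x
    rw [bigop_apply W L F w _ v (Gc W L F w v Sinv h) x, LinearMap.id_apply]
    simp only [hGc]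
    exact hcan x
  · -- part 2 : component preserving
    intro j
    apply le_antisymm
    · rintro x ⟨g, rfl⟩
      rw [mem_range_MJ]
      intro k hk
      rw [Q_MJ_apply W L F _ (Gc W L F w v Sinv h) j k g, if_neg hk]
    · intro x hx
      rw [mem_range_MJ] at hx
      have hmem : SFop W L F ((x j : H)) ∈ W j := Submodule.mem_comap.mp (x j).2
      obtain ⟨g0, hg0⟩ := SjOp_surj W L F j (hF j)
        ⟨((w j * v j : ℝ) : 𝕜) • SFop W L F ((x j : H)), Submodule.smul_mem _ _ hmem⟩
      have hg0' : ((SjOp W L F j g0 : H))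
          = ((w j * v j : ℝ) : 𝕜) • SFop W L F ((x j : H)) := congrArg Subtype.val hg0
      refine ⟨WithLp.toLp 2 (Pi.single j g0), ?_⟩
      refine PiLp.ext fun k => ?_
      rw [Q_MJ_apply W L F _ (Gc W L F w v Sinv h) j k (WithLp.toLp 2 (Pi.single j g0))]
      by_cases hk : k = j
      · subst hk
        rw [if_pos rfl, WithLp.ofLp_toLp, Pi.single_eq_same]
        apply Subtype.ext
        have hcoe : ((∑ l, (inner 𝕜 (F k l) g0 : 𝕜) • Gc W L F w v Sinv h k l :
              ↥(Submodule.comap (SFop W L F) (W k))) : H)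
            = ((w k * v k : ℝ) : 𝕜)⁻¹ • Sinv ((SjOp W L F k g0 : H)) := by
          simp only [Submodule.coe_sum, SetLike.val_smul, Gc_coe, SjOp_apply, map_sum,
            map_smul, Finset.smul_sum, smul_smul]
          refine Finset.sum_congr rfl fun l _ => ?_
          congr 1
          ring
        rw [hcoe, hg0', map_smul, smul_smul, inv_mul_cancel₀ (hwvne k), one_smul]
        exact LinearMap.congr_fun h' ((x k : H))
      · rw [if_neg hk]
        exact (hx k hk).symm
  · -- part 3 : minimality and uniqueness of the synthesis map
    intro V v' hv'pos hVsup G hG hdual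
    have hdual' : ∀ x : H,
        ∑ i, ∑ l, (inner 𝕜 ((F i l : H)) x : 𝕜)
          • (((w i * v' i : ℝ) : 𝕜) • (G i l : H)) = x := by
      intro x
      have hthis := LinearMap.congr_fun hdual x
      rw [bigop_apply W L F w V v' G x] at hthis
      rw [LinearMap.id_apply] at hthis
      exact hthis
    have hsplit := mse_split W L F Sinv h h'
      (fun i l => ((w i * v' i : ℝ) : 𝕜) • (G i l : H)) hdual' hcan
    have hVsum : ∑ i, ∑ l, frobSq ((synthOp V v' ∘ₗ CFop V L G) ∘ₗ Mpair L i l ∘ₗ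
          CFadj W L F ∘ₗ analysisOp W w)
        = ∑ i, ∑ l, ‖((w i * v' i : ℝ) : 𝕜) • (G i l : H)‖^2 :=
      Finset.sum_congr rfl fun i _ => Finset.sum_congr rfl fun l _ =>
        frob_erase W L F w V v' G i l (hnorm i l)
    have hnn : (0:ℝ) ≤ ∑ i, ∑ l,
        ‖((w i * v' i : ℝ) : 𝕜) • (G i l : H) - Sinv ((F i l : H))‖^2 :=
      Finset.sum_nonneg fun i _ => Finset.sum_nonneg fun l _ => sq_nonneg _
    constructor
    · rw [hcansum, hVsum, hsplit]
      linarith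
    · intro heqsum
      rw [hVsum, hcansum] at heqsum
      have hu0 : ∑ i, ∑ l,
          ‖((w i * v' i : ℝ) : 𝕜) • (G i l : H) - Sinv ((F i l : H))‖^2 = 0 := by
        have := hsplit
        rw [heqsum] at this
        linarith
      have heq : ∀ (i : Fin m) (l : L i),
          ((w i * v' i : ℝ) : 𝕜) • (G i l : H) = Sinv ((F i l : H)) := by
        intro i l
        have h1 := (Finset.sum_eq_zero_iff_of_nonneg
          (fun i _ => Finset.sum_nonneg fun l _ => sq_nonneg _)).mp hu0 i (Finset.mem_univ i)
        have h2 := (Finset.sum_eq_zero_iff_of_nonneg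
          (fun l _ => sq_nonneg _)).mp h1 l (Finset.mem_univ l)
        have h3 := pow_eq_zero_iff (n := 2) (by norm_num) |>.mp h2
        exact sub_eq_zero.mp (norm_eq_zero.mp h3)
      apply LinearMap.ext; intro x
      simp only [LinearMap.comp_apply, synthOp_apply, CFop_apply, Submodule.coe_sum,
        SetLike.val_smul, Finset.smul_sum]
      refine Finset.sum_congr rfl fun i _ => Finset.sum_congr rfl fun l _ => ?_
      rw [smul_comm ((v' i : ℝ) : 𝕜) (x i l), smul_comm ((v i : ℝ) : 𝕜) (x i l)]
      congr 1
      have h1 : ((w i : ℝ) : 𝕜) • ((v' i : ℝ) : 𝕜) • (G i l : H)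
          = ((w i : ℝ) : 𝕜) • ((v i : ℝ) : 𝕜) • ((Gc W L F w v Sinv h i l : H)) := by
        rw [smul_smul, smul_smul]
        have e1 : ((w i : ℝ) : 𝕜) * ((v' i : ℝ) : 𝕜) = ((w i * v' i : ℝ) : 𝕜) := by
          push_cast; ring
        have e2 : ((w i : ℝ) : 𝕜) * ((v i : ℝ) : 𝕜) = ((w i * v i : ℝ) : 𝕜) := by
          push_cast; ring
        rw [e1, e2, heq i l, hGc i l]
      exact smul_right_injective H (hwne i) h1
  · -- part 4 : uniqueness of component preserving minimizers with weights v
    intro V hVsup G hG hdual hcp heqsum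
    have hdual' : ∀ x : H,
        ∑ i, ∑ l, (inner 𝕜 ((F i l : H)) x : 𝕜)
          • (((w i * v i : ℝ) : 𝕜) • (G i l : H)) = x := by
      intro x
      have hthis := LinearMap.congr_fun hdual x
      rw [bigop_apply W L F w V v G x] at hthis
      rw [LinearMap.id_apply] at hthis
      exact hthis
    have hsplit := mse_split W L F Sinv h h'
      (fun i l => ((w i * v i : ℝ) : 𝕜) • (G i l : H)) hdual' hcan
    have hVsum : ∑ i, ∑ l, frobSq ((synthOp V v ∘ₗ CFop V L G) ∘ₗ Mpair L i l ∘ₗ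
          CFadj W L F ∘ₗ analysisOp W w)
        = ∑ i, ∑ l, ‖((w i * v i : ℝ) : 𝕜) • (G i l : H)‖^2 :=
      Finset.sum_congr rfl fun i _ => Finset.sum_congr rfl fun l _ =>
        frob_erase W L F w V v G i l (hnorm i l)
    rw [hVsum, hcansum] at heqsum
    have hu0 : ∑ i, ∑ l,
        ‖((w i * v i : ℝ) : 𝕜) • (G i l : H) - Sinv ((F i l : H))‖^2 = 0 := by
      have := hsplit
      rw [heqsum] at this
      linarith
    have heq : ∀ (i : Fin m) (l : L i),
        ((w i * v i : ℝ) : 𝕜) • (G i l : H) = Sinv ((F i l : H)) := by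
      intro i l
      have h1 := (Finset.sum_eq_zero_iff_of_nonneg
        (fun i _ => Finset.sum_nonneg fun l _ => sq_nonneg _)).mp hu0 i (Finset.mem_univ i)
      have h2 := (Finset.sum_eq_zero_iff_of_nonneg
        (fun l _ => sq_nonneg _)).mp h1 l (Finset.mem_univ l)
      have h3 := pow_eq_zero_iff (n := 2) (by norm_num) |>.mp h2
      exact sub_eq_zero.mp (norm_eq_zero.mp h3)
    have hGeq : ∀ (i : Fin m) (l : L i),
        (G i l : H) = ((w i * v i : ℝ) : 𝕜)⁻¹ • Sinv ((F i l : H)) := by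
      intro i l
      rw [← heq i l, smul_smul, inv_mul_cancel₀ (hwvne i), one_smul]
    refine ⟨?_, hGeq⟩
    intro i
    have hWi : Submodule.span 𝕜 (Set.range (fun l => ((F i l : H)))) = W i :=
      span_coe (W i) (F i) (hF i)
    have hVi : Submodule.span 𝕜 (Set.range (fun l => ((G i l : H)))) = V i :=
      span_coe (V i) (G i) (hG i)
    apply le_antisymm
    · rw [← hVi]
      apply Submodule.span_le.mpr
      rintro y ⟨l, rfl⟩
      show (G i l : H) ∈ Submodule.comap (SFop W L F) (W i)
      rw [Submodule.mem_comap, hGeq i l, map_smul]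
      have hSS : SFop W L F (Sinv ((F i l : H))) = (F i l : H) :=
        LinearMap.congr_fun h ((F i l : H))
      rw [hSS]
      exact Submodule.smul_mem _ _ (F i l).2
    · intro y hy
      rw [Submodule.mem_comap] at hy
      have h1 : Submodule.map Sinv (W i) ≤ V i := by
        rw [← hWi, Submodule.map_span]
        apply Submodule.span_le.mpr
        rintro z ⟨u, ⟨l, rfl⟩, rfl⟩
        show Sinv ((F i l : H)) ∈ V i
        rw [← heq i l]
        exact Submodule.smul_mem _ _ (G i l).2
      have h2 : y = Sinv (SFop W L F y) := (LinearMap.congr_fun h' y).symm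
      rw [h2]
      exact h1 ⟨SFop W L F y, hy, rfl⟩
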